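/- arXiv:2210.01245 — 2 statements merged into one kernel-verified Lean document; each statement's English description precedes it below -/
import Mathlib

section
/- Let r > 0 and α ∈ [0,1]. Let P be a real h×m matrix, let d ∈ [0,r]^m, let W be a real m×n matrix with σ = ‖W‖, and let O be a semi-orthogonal real m×n matrix. Then ‖P·(α·diag(d)·W + (1−α)·O)‖ ≤ (1 + α(r·σ − 1))·‖P‖. -/
open Matrix

/-- A real `N × M` matrix is semi-orthogonal: `Aᵀ * A = 1` when `M < N`,
and `A * Aᵀ = 1` when `M ≥ N`. -/
def IsSemiOrthogonal {N M : ℕ} (A : Matrix (Fin N) (Fin M) ℝ) : Prop :=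
  if M < N then Aᵀ * A = 1 else A * Aᵀ = 1

/-- The operator norm of a real matrix induced by the Euclidean vector norms
(i.e. the largest singular value). -/
noncomputable def opNorm {m n : ℕ} (A : Matrix (Fin m) (Fin n) ℝ) : ℝ :=
  ‖LinearMap.toContinuousLinearMap (Matrix.toEuclideanLin A)‖

open scoped Matrix.Norms.L2Operator

lemma opNorm_eq_l2 {m n : ℕ} (A : Matrix (Fin m) (Fin n) ℝ) : opNorm A = ‖A‖ := rfl

lemma diag_norm_le {m : ℕ} (d : Fin m → ℝ) (r : ℝ) (hr : 0 ≤ r)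
    (hd : ∀ i, d i ∈ Set.Icc (0:ℝ) r) : ‖(Matrix.diagonal d : Matrix (Fin m) (Fin m) ℝ)‖ ≤ r := by
  rw [Matrix.l2_opNorm_def]
  apply ContinuousLinearMap.opNorm_le_bound _ hr
  intro x
  simp only [LinearEquiv.trans_apply, LinearMap.coe_toContinuousLinearMap']
  rw [Matrix.toEuclideanLin_apply]
  rw [EuclideanSpace.norm_eq, EuclideanSpace.norm_eq]
  rw [← Real.sqrt_sq hr, ← Real.sqrt_mul (by positivity)]
  apply Real.sqrt_le_sqrt
  rw [Finset.mul_sum]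
  apply Finset.sum_le_sum
  intro i _
  simp only [WithLp.ofLp_toLp, Matrix.mulVec_diagonal]
  rw [Real.norm_eq_abs, Real.norm_eq_abs, abs_mul, mul_pow]
  have hdi : |d i| ≤ r := abs_le.mpr ⟨by linarith [(hd i).1], (hd i).2⟩
  have := abs_nonneg (d i)
  have h2 : |d i|^2 ≤ r^2 := by nlinarith
  nlinarith [sq_nonneg (x i), sq_abs (x i)]

lemma semiorth_norm_le_one {N M : ℕ} (A : Matrix (Fin N) (Fin M) ℝ)
    (hA : Aᵀ * A = 1 ∨ A * Aᵀ = 1) : ‖A‖ ≤ 1 := by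
  have key : ∀ {N M : ℕ} (B : Matrix (Fin N) (Fin M) ℝ), Bᵀ * B = 1 → ‖B‖ ≤ 1 := by
    intro N M B hB
    have h1 : ‖B‖ * ‖B‖ ≤ 1 := by
      have := Matrix.l2_opNorm_conjTranspose_mul_self B
      rw [B.conjTranspose_eq_transpose_of_trivial, hB] at this
      rw [← this]
      calc ‖(1 : Matrix (Fin M) (Fin M) ℝ)‖
          = ‖(1 : (EuclideanSpace ℝ (Fin M)) →L[ℝ] (EuclideanSpace ℝ (Fin M)))‖ := by
            rw [Matrix.cstar_norm_def, _root_.map_one]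
        _ ≤ 1 := ContinuousLinearMap.norm_id_le
    nlinarith [norm_nonneg B]
  rcases hA with h | h
  · exact key A h
  · have := key Aᵀ (by rwa [Matrix.transpose_transpose])
    rwa [← A.conjTranspose_eq_transpose_of_trivial, Matrix.l2_opNorm_conjTranspose] at this

/-- Lemma 1 of the paper (single-step upper recursion):
`‖P (α diag(d) W + (1-α) O)‖ ≤ (1 + α (r σ - 1)) ‖P‖`. -/
theorem single_step_upper_recursion
    (h m n : ℕ) (r α : ℝ) (hr : 0 < r) (hα0 : 0 ≤ α) (hα1 : α ≤ 1)
    (P : Matrix (Fin h) (Fin m) ℝ)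
    (d : Fin m → ℝ) (hd : ∀ i, d i ∈ Set.Icc (0 : ℝ) r)
    (W : Matrix (Fin m) (Fin n) ℝ) (σ : ℝ) (hσ : σ = opNorm W)
    (O : Matrix (Fin m) (Fin n) ℝ) (hO : IsSemiOrthogonal O) :
    opNorm (P * (α • (Matrix.diagonal d * W) + (1 - α) • O)) ≤
      (1 + α * (r * σ - 1)) * opNorm P := by
  rw [opNorm_eq_l2, opNorm_eq_l2]
  rw [opNorm_eq_l2] at hσ
  have hO' : Oᵀ * O = 1 ∨ O * Oᵀ = 1 := by
    unfold IsSemiOrthogonal at hO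
    split at hO
    · exact Or.inl hO
    · exact Or.inr hO
  have hσ0 : 0 ≤ σ := hσ ▸ norm_nonneg W
  have hOn : ‖O‖ ≤ 1 := semiorth_norm_le_one O hO'
  have hDn : ‖(Matrix.diagonal d : Matrix (Fin m) (Fin m) ℝ)‖ ≤ r := diag_norm_le d r hr.le hd
  have key : ‖P * (Matrix.diagonal d * W)‖ ≤ ‖P‖ * (r * σ) := by
    have t1 := Matrix.l2_opNorm_mul P (Matrix.diagonal d * W)
    have t2 := Matrix.l2_opNorm_mul (Matrix.diagonal d) W
    rw [hσ]
    have t3 : ‖Matrix.diagonal d * W‖ ≤ r * ‖W‖ :=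
      t2.trans (mul_le_mul_of_nonneg_right hDn (norm_nonneg W))
    exact t1.trans (mul_le_mul_of_nonneg_left t3 (norm_nonneg P))
  have key2 : ‖P * O‖ ≤ ‖P‖ := by
    nlinarith [Matrix.l2_opNorm_mul P O, norm_nonneg P, norm_nonneg O]
  rw [Matrix.mul_add, Matrix.mul_smul, Matrix.mul_smul]
  calc ‖α • (P * (Matrix.diagonal d * W)) + (1 - α) • (P * O)‖
      ≤ ‖α • (P * (Matrix.diagonal d * W))‖ + ‖(1 - α) • (P * O)‖ := norm_add_le _ _
    _ = α * ‖P * (Matrix.diagonal d * W)‖ + (1 - α) * ‖P * O‖ := by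
        rw [norm_smul, norm_smul, Real.norm_eq_abs, Real.norm_eq_abs,
          abs_of_nonneg hα0, abs_of_nonneg (by linarith)]
    _ ≤ α * (‖P‖ * (r * σ)) + (1 - α) * ‖P‖ := by
        have := norm_nonneg (P * (Matrix.diagonal d * W)); have := norm_nonneg (P * O)
        nlinarith
    _ = (1 + α * (r * σ - 1)) * ‖P‖ := by ring
end

section
/- Let r > 0. Let P be a real h×m matrix, let d ∈ [0,r]^m, let W be a real m×n matrix with σ = ‖W‖, and let O be a semi-orthogonal real m×n matrix with m ≤ n. Suppose 0 < α < 1/(1 + r·σ). Then ‖P·(α·diag(d)·W + (1−α)·O)‖ ≥ (1 − α(1 + r·σ))·‖P‖. -/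
open Matrix

open scoped Matrix.Norms.L2Operator

lemma l2_norm_one_le {m : ℕ} : ‖(1 : Matrix (Fin m) (Fin m) ℝ)‖ ≤ 1 := by
  rw [Matrix.l2_opNorm_def]
  refine ContinuousLinearMap.opNorm_le_bound _ zero_le_one fun x => ?_
  simp only [LinearEquiv.trans_apply, LinearMap.coe_toContinuousLinearMap',
    Matrix.toEuclideanLin_apply, Matrix.one_mulVec, one_mul]
  simp

lemma l2_norm_diagonal_le {m : ℕ} (d : Fin m → ℝ) (r : ℝ) (hr : 0 ≤ r)
    (hd : ∀ i, |d i| ≤ r) : ‖(Matrix.diagonal d : Matrix (Fin m) (Fin m) ℝ)‖ ≤ r := by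
  rw [Matrix.l2_opNorm_def]
  refine ContinuousLinearMap.opNorm_le_bound _ hr fun x => ?_
  simp only [LinearEquiv.trans_apply, LinearMap.coe_toContinuousLinearMap']
  rw [Matrix.toEuclideanLin_apply]
  rw [EuclideanSpace.norm_eq, EuclideanSpace.norm_eq, ← Real.sqrt_sq hr,
    ← Real.sqrt_mul (by positivity)]
  refine Real.sqrt_le_sqrt ?_
  rw [Finset.mul_sum]
  refine Finset.sum_le_sum fun i _ => ?_
  simp only [WithLp.ofLp_toLp, Matrix.mulVec_diagonal, Real.norm_eq_abs,
    sq_abs]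
  rw [mul_pow]
  have h1 : (d i) ^ 2 ≤ r ^ 2 := by
    rw [← sq_abs]
    exact pow_le_pow_left₀ (abs_nonneg _) (hd i) 2
  have h2 : (0:ℝ) ≤ (x.ofLp i) ^ 2 := sq_nonneg _
  have := mul_le_mul_of_nonneg_right h1 h2
  refine this.trans ?_
  simp

/-- Lemma 3 of the paper (single-step lower recursion): if `m ≤ n` and
`0 < α < 1/(1 + r σ)`, then
`‖P (α diag(d) W + (1-α) O)‖ ≥ (1 - α (1 + r σ)) ‖P‖`. -/
theorem single_step_lower_recursion
    (h m n : ℕ) (hmn : m ≤ n) (r α : ℝ) (hr : 0 < r)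
    (P : Matrix (Fin h) (Fin m) ℝ)
    (d : Fin m → ℝ) (hd : ∀ i, d i ∈ Set.Icc (0 : ℝ) r)
    (W : Matrix (Fin m) (Fin n) ℝ) (σ : ℝ) (hσ : σ = opNorm W)
    (O : Matrix (Fin m) (Fin n) ℝ) (hO : IsSemiOrthogonal O)
    (hα0 : 0 < α) (hα1 : α < 1 / (1 + r * σ)) :
    (1 - α * (1 + r * σ)) * opNorm P ≤
      opNorm (P * (α • (Matrix.diagonal d * W) + (1 - α) • O)) := by
  classical
  rw [opNorm_eq_l2, opNorm_eq_l2]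
  rw [opNorm_eq_l2] at hσ
  set B := α • (Matrix.diagonal d * W) + (1 - α) • O with hB
  have hσ0 : 0 ≤ σ := hσ ▸ norm_nonneg _
  have hα1' : α * (1 + r * σ) < 1 := by
    rw [lt_div_iff₀ (by positivity)] at hα1; linarith
  have hOO : O * Oᵀ = 1 := by
    unfold IsSemiOrthogonal at hO
    rwa [if_neg (by omega)] at hO
  have hOtH : (Oᵀ)ᴴ = O := by
    ext i j; simp [Matrix.conjTranspose_apply]
  have hOt2 : ‖Oᵀ‖ * ‖Oᵀ‖ ≤ 1 := by
    have h2 := Matrix.l2_opNorm_conjTranspose_mul_self (Oᵀ)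
    rw [hOtH, hOO] at h2
    rw [← h2]; exact l2_norm_one_le
  have hOt : ‖Oᵀ‖ ≤ 1 := by nlinarith [norm_nonneg Oᵀ]
  have key : P * B * Oᵀ =
      α • (P * (Matrix.diagonal d * (W * Oᵀ))) + (1 - α) • P := by
    simp only [hB, Matrix.mul_add, Matrix.add_mul, mul_smul_comm, smul_mul_assoc,
      Matrix.smul_mul, Matrix.mul_smul, Matrix.mul_assoc, hOO, Matrix.mul_one]
  have e1 : (1 - α) • P = P * B * Oᵀ - α • (P * (Matrix.diagonal d * (W * Oᵀ))) := by
    rw [key, add_sub_cancel_left]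
  have hDle : ‖Matrix.diagonal d‖ ≤ r :=
    l2_norm_diagonal_le d r hr.le (fun i => by
      have hi := hd i; rw [abs_of_nonneg hi.1]; exact hi.2)
  have hWO : ‖W * Oᵀ‖ ≤ σ := by
    calc ‖W * Oᵀ‖ ≤ ‖W‖ * ‖Oᵀ‖ := Matrix.l2_opNorm_mul _ _
      _ ≤ σ * 1 := mul_le_mul (le_of_eq hσ.symm) hOt (norm_nonneg _) hσ0
      _ = σ := mul_one σ
  have hX : ‖P * (Matrix.diagonal d * (W * Oᵀ))‖ ≤ ‖P‖ * (r * σ) := by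
    calc ‖P * (Matrix.diagonal d * (W * Oᵀ))‖
        ≤ ‖P‖ * ‖Matrix.diagonal d * (W * Oᵀ)‖ := Matrix.l2_opNorm_mul _ _
      _ ≤ ‖P‖ * (r * σ) := by
          refine mul_le_mul_of_nonneg_left ?_ (norm_nonneg _)
          calc ‖Matrix.diagonal d * (W * Oᵀ)‖
              ≤ ‖Matrix.diagonal d‖ * ‖W * Oᵀ‖ := Matrix.l2_opNorm_mul _ _
            _ ≤ r * σ := mul_le_mul hDle hWO (norm_nonneg _) hr.le
  have hPBO : ‖P * B * Oᵀ‖ ≤ ‖P * B‖ := by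
    calc ‖P * B * Oᵀ‖ ≤ ‖P * B‖ * ‖Oᵀ‖ := Matrix.l2_opNorm_mul _ _
      _ ≤ ‖P * B‖ * 1 := mul_le_mul_of_nonneg_left hOt (norm_nonneg _)
      _ = ‖P * B‖ := mul_one _
  have main : (1 - α) * ‖P‖ ≤ ‖P * B‖ + α * (‖P‖ * (r * σ)) := by
    have hn := norm_sub_le (P * B * Oᵀ) (α • (P * (Matrix.diagonal d * (W * Oᵀ))))
    rw [← e1, norm_smul, norm_smul, Real.norm_eq_abs, Real.norm_eq_abs,
      abs_of_nonneg (by nlinarith [mul_nonneg hα0.le (mul_nonneg hr.le hσ0)] : (0:ℝ) ≤ 1 - α), abs_of_nonneg hα0.le] at hn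
    have := mul_le_mul_of_nonneg_left hX hα0.le
    linarith
  nlinarith [norm_nonneg P]
end
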